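/- arXiv:2307.07823 — 7 statements merged into one kernel-verified Lean document; each statement's English description precedes it below -/
import Mathlib

section
/- Let K be a field of characteristic zero, let n ≥ 2 and d ≥ 2 be integers, let A = K[x_1,…,x_n] be the polynomial algebra, and let A_0 be the Veronese subalgebra of A of degree d. Then every K-derivation D : A_0 → A_0 extends uniquely to a K-derivation S : A → A (i.e., there is exactly one K-derivation S of A whose restriction to A_0 equals D), and this unique extension S is d-graded, i.e., S(x_i) lies in the component A_1 for every i = 1,…,n. -/
set_option synthInstance.maxHeartbeats 1000000
set_option maxHeartbeats 1000000

open MvPolynomial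

/-- Total degree of a monomial exponent vector. -/
def mdeg {n : ℕ} (m : Fin n →₀ ℕ) : ℕ := m.sum fun _ k => k

lemma mdeg_add {n : ℕ} (a b : Fin n →₀ ℕ) : mdeg (a + b) = mdeg a + mdeg b :=
  Finsupp.sum_add_index' (fun _ => rfl) (fun _ _ _ => rfl)

/-- The `i`-th component `A_i` of the `ℤ/d`-grading of `K[x_1,…,x_n]`:
polynomials all of whose monomials have total degree ≡ i (mod d). -/
def comp (K : Type) [Field K] (n d i : ℕ) : Submodule K (MvPolynomial (Fin n) K) where
  carrier := {f | ∀ m ∈ f.support, mdeg m % d = i % d}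
  add_mem' := by
    intro f g hf hg m hm
    rcases Finset.mem_union.mp (MvPolynomial.support_add hm) with h | h
    · exact hf m h
    · exact hg m h
  zero_mem' := by intro m hm; simp at hm
  smul_mem' := by
    intro c f hf m hm
    exact hf m (Finsupp.support_smul hm)

/-- The Veronese subalgebra `A_0` of degree `d`. -/
noncomputable def veronese (K : Type) [Field K] (n d : ℕ) : Subalgebra K (MvPolynomial (Fin n) K) :=
  (comp K n d 0).toSubalgebra
    (by
      classical
      intro m hm
      rw [show (1 : MvPolynomial (Fin n) K) = MvPolynomial.monomial 0 1 from rfl,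
        MvPolynomial.support_monomial] at hm
      simp only [one_ne_zero, if_false, Finset.mem_singleton] at hm
      subst hm
      simp [mdeg])
    (by
      intro f g hf hg m hm
      obtain ⟨a, ha, b, hb, rfl⟩ := Finset.mem_add.mp (MvPolynomial.support_mul _ _ hm)
      rw [mdeg_add, Nat.add_mod, hf a ha, hg b hb]
      simp)

lemma X_pow_mem (K : Type) [Field K] (n d : ℕ) (i : Fin n) :
    (MvPolynomial.X i : MvPolynomial (Fin n) K) ^ d ∈ veronese K n d := by
  classical
  intro m hm
  rw [MvPolynomial.X_pow_eq_monomial, MvPolynomial.support_monomial] at hm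
  simp only [one_ne_zero, if_false, Finset.mem_singleton] at hm
  subst hm
  simp [mdeg, Finsupp.sum_single_index, Nat.mod_self]

lemma mdeg_single {n : ℕ} (i : Fin n) (k : ℕ) : mdeg (Finsupp.single i k) = k :=
  Finsupp.sum_single_index rfl

lemma mdeg_eq_zero {n : ℕ} {m : Fin n →₀ ℕ} (h : mdeg m = 0) : m = 0 := by
  classical
  ext a
  by_cases ha : a ∈ m.support
  · have := Finset.sum_eq_zero_iff.mp h a ha
    simpa using this
  · simpa using Finsupp.notMem_support_iff.mp ha

lemma exists_le_mdeg {n : ℕ} (e : ℕ) (m : Fin n →₀ ℕ) (h : e ≤ mdeg m) :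
    ∃ a, a ≤ m ∧ mdeg a = e := by
  induction e with
  | zero => exact ⟨0, zero_le, rfl⟩
  | succ e ih =>
    obtain ⟨a, ham, hae⟩ := ih (Nat.le_of_succ_le h)
    have hne : ∃ i, a i < m i := by
      by_contra hc
      push_neg at hc
      have : a = m := le_antisymm ham (Finsupp.le_def.mpr hc)
      subst this
      omega
    obtain ⟨i, hi⟩ := hne
    refine ⟨a + Finsupp.single i 1, ?_, ?_⟩
    · rw [Finsupp.le_def]
      intro s
      rcases eq_or_ne s i with rfl | hs
      · simpa using hi
      · simp [Finsupp.single_apply, Ne.symm hs]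
        exact Finsupp.le_def.mp ham s
    · rw [mdeg_add, mdeg_single, hae]


section
variable {K : Type} [Field K] [CharZero K] {n d : ℕ}

lemma mem_comp_monomial {i : ℕ} (m : Fin n →₀ ℕ) (c : K) (h : mdeg m % d = i % d) :
    (monomial m c : MvPolynomial (Fin n) K) ∈ comp K n d i := by
  classical
  intro m' hm'
  rw [MvPolynomial.support_monomial] at hm'
  split_ifs at hm'
  · simp at hm'
  · rw [Finset.mem_singleton] at hm'; subst hm'; exact h

lemma mem_veronese_monomial (m : Fin n →₀ ℕ) (c : K) (h : mdeg m % d = 0) :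
    (monomial m c : MvPolynomial (Fin n) K) ∈ veronese K n d :=
  mem_comp_monomial m c (by simpa using h)

lemma monomial_dvd_iff_support (s : Fin n →₀ ℕ) (f : MvPolynomial (Fin n) K) :
    (monomial s 1 : MvPolynomial (Fin n) K) ∣ f ↔ ∀ m ∈ f.support, s ≤ m := by
  rw [MvPolynomial.monomial_one_dvd_iff_modMonomial_eq_zero]
  constructor
  · intro h m hm
    by_contra hle
    have h2 := MvPolynomial.coeff_modMonomial_of_not_le f hle
    rw [h, coeff_zero] at h2
    exact MvPolynomial.mem_support_iff.mp hm h2.symm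
  · intro h
    ext m
    by_cases hle : s ≤ m
    · rw [MvPolynomial.coeff_modMonomial_of_le f hle, coeff_zero]
    · rw [MvPolynomial.coeff_modMonomial_of_not_le f hle, coeff_zero]
      by_contra hc
      exact hle (h m (MvPolynomial.mem_support_iff.mpr hc))

lemma dvd_of_monomial_mul_dvd {i j : Fin n} (hij : i ≠ j) (k l : ℕ)
    (P : MvPolynomial (Fin n) K)
    (h : (X i : MvPolynomial (Fin n) K) ^ k ∣ (monomial (Finsupp.single j l) 1) * P) :
    (X i : MvPolynomial (Fin n) K) ^ k ∣ P := by
  rw [X_pow_eq_monomial, monomial_dvd_iff_support] at h ⊢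
  intro m hm
  have hmem : Finsupp.single j l + m ∈ ((monomial (Finsupp.single j l) 1 : MvPolynomial (Fin n) K) * P).support := by
    rw [MvPolynomial.mem_support_iff, MvPolynomial.coeff_monomial_mul, one_mul]
    exact MvPolynomial.mem_support_iff.mp hm
  have h2 := h _ hmem
  rw [Finsupp.single_le_iff] at h2 ⊢
  simpa [Finsupp.single_apply, Ne.symm hij] using h2

lemma dvd_D (hn : 2 ≤ n) (hd : 2 ≤ d) (D : Derivation K (veronese K n d) (veronese K n d))
    (i : Fin n) :
    (X i : MvPolynomial (Fin n) K)^(d-1) ∣ ↑(D ⟨X i ^ d, X_pow_mem K n d i⟩) := by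
  obtain ⟨j, hij⟩ : ∃ j : Fin n, i ≠ j := by
    refine ⟨if h : i.val = 0 then ⟨1, by omega⟩ else ⟨0, by omega⟩, ?_⟩
    split_ifs with h <;>
    · intro hc
      have := congrArg Fin.val hc
      simp at this
      omega
  have hu : (X i : MvPolynomial (Fin n) K)^d ∈ veronese K n d := X_pow_mem K n d i
  have hv : (X j : MvPolynomial (Fin n) K)^d ∈ veronese K n d := X_pow_mem K n d j
  have hw : (X i : MvPolynomial (Fin n) K) * X j^(d-1) ∈ veronese K n d := by
    have e : (X i : MvPolynomial (Fin n) K) * X j^(d-1)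
        = monomial (Finsupp.single i 1 + Finsupp.single j (d-1)) 1 := by
      rw [X_pow_eq_monomial, show (X i : MvPolynomial (Fin n) K) = monomial (Finsupp.single i 1) 1 from rfl,
        monomial_mul, one_mul]
    rw [e]
    exact mem_veronese_monomial _ _
      (by rw [mdeg_add, mdeg_single, mdeg_single, show 1 + (d-1) = d by omega, Nat.mod_self])
  set u : veronese K n d := ⟨_, hu⟩ with hu'
  set v : veronese K n d := ⟨_, hv⟩ with hv'
  set w : veronese K n d := ⟨_, hw⟩ with hw'
  set E := (Algebra.linearMap (veronese K n d) (MvPolynomial (Fin n) K)).compDer D with hE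
  have hrel : w ^ d = u * v ^ (d-1) := by
    apply Subtype.ext
    push_cast
    ring
  have h1 : E (w^d) = E (u * v^(d-1)) := by rw [hrel]
  rw [Derivation.leibniz_pow, Derivation.leibniz, Derivation.leibniz_pow] at h1
  have hEu : E u = ↑(D u) := rfl
  simp only [Algebra.smul_def, Subalgebra.algebraMap_eq, RingHom.coe_comp, Function.comp_apply,
    Algebra.algebraMap_self_apply, Subalgebra.coe_val, eq_natCast, AlgHom.coe_toRingHom, Subalgebra.coe_val, SubmonoidClass.coe_pow,
    MulMemClass.coe_mul] at h1
  have h2 : (X j ^ d : MvPolynomial (Fin n) K)^(d-1) * E u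
      = (d : MvPolynomial (Fin n) K) * ((X i * X j^(d-1) : MvPolynomial (Fin n) K)^(d-1) * E w)
        - X i^d * (((d-1 : ℕ) : MvPolynomial (Fin n) K) * ((X j^d : MvPolynomial (Fin n) K)^(d-1-1) * E v)) := by
    rw [h1]; ring
  have d1 : (X i : MvPolynomial (Fin n) K)^(d-1)
      ∣ (d : MvPolynomial (Fin n) K) * ((X i * X j^(d-1) : MvPolynomial (Fin n) K)^(d-1) * E w) := by
    apply Dvd.dvd.mul_left
    rw [mul_pow]
    exact (dvd_mul_right _ _).mul_right _
  have d2 : (X i : MvPolynomial (Fin n) K)^(d-1)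
      ∣ X i^d * (((d-1 : ℕ) : MvPolynomial (Fin n) K) * ((X j^d : MvPolynomial (Fin n) K)^(d-1-1) * E v)) :=
    dvd_mul_of_dvd_left (pow_dvd_pow _ (by omega)) _
  have d3 : (X i : MvPolynomial (Fin n) K)^(d-1) ∣ (X j^d : MvPolynomial (Fin n) K)^(d-1) * E u := by
    rw [h2]; exact dvd_sub d1 d2
  rw [show ((X j ^ d : MvPolynomial (Fin n) K)^(d-1)) = monomial (Finsupp.single j (d*(d-1))) 1
    by rw [← pow_mul, X_pow_eq_monomial]] at d3
  have d4 := dvd_of_monomial_mul_dvd hij (d-1) (d*(d-1)) (E u) d3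
  exact hEu ▸ d4

end

lemma mod_step {d s : ℕ} (hd : 2 ≤ d) (h : (d - 1 + s) % d = 0) : s % d = 1 % d := by
  obtain ⟨t, ht⟩ := Nat.dvd_of_mod_eq_zero h
  rcases t with _ | t'
  · omega
  · rw [Nat.mul_succ] at ht
    have hs : s = 1 + d * t' := by
      have h2 : d * t' + d = d - 1 + s := ht.symm
      omega
    rw [hs, Nat.add_mul_mod_self_left]

lemma coe_veronese_prod {K : Type} [Field K] {n d : ℕ} (s : Finset (Fin n))
    (f : Fin n → veronese K n d) :
    ((↑(∏ i ∈ s, f i) : MvPolynomial (Fin n) K)) = ∏ i ∈ s, (↑(f i) : MvPolynomial (Fin n) K) :=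
  map_prod (veronese K n d).val f s


/-- every `K`-derivation of the Veronese subalgebra `A₀` of degree `d` of
`A = K[x₁,…,xₙ]` (char `K` = 0, `n ≥ 2`, `d ≥ 2`) extends uniquely to a `K`-derivation of `A`,
and this unique extension is `d`-graded, i.e. sends each `xᵢ` into the component `A₁`. -/
theorem stmt0 (K : Type) [Field K] [CharZero K] (n d : ℕ) (hn : 2 ≤ n) (hd : 2 ≤ d)
    (D : Derivation K (veronese K n d) (veronese K n d)) :
    (∃! S : Derivation K (MvPolynomial (Fin n) K) (MvPolynomial (Fin n) K),
        ∀ a : veronese K n d, S ↑a = ↑(D a)) ∧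
    (∀ S : Derivation K (MvPolynomial (Fin n) K) (MvPolynomial (Fin n) K),
        (∀ a : veronese K n d, S ↑a = ↑(D a)) →
        ∀ i : Fin n, S (MvPolynomial.X i) ∈ comp K n d 1) := by
  classical
  have hd0 : (d : K) ≠ 0 := Nat.cast_ne_zero.mpr (by omega)
  set u : Fin n → veronese K n d := fun i => ⟨X i ^ d, X_pow_mem K n d i⟩ with hu
  have hdvd := fun i => dvd_D hn hd D i
  set q' : Fin n → MvPolynomial (Fin n) K := fun i => (hdvd i).choose with hq'def
  have hq' : ∀ i, (↑(D (u i)) : MvPolynomial (Fin n) K) = X i ^ (d-1) * q' i :=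
    fun i => (hdvd i).choose_spec
  set q : Fin n → MvPolynomial (Fin n) K := fun i => (d:K)⁻¹ • q' i with hqdef
  set S := mkDerivation K q with hS
  have hSX : ∀ i, S (X i) = q i := fun i => mkDerivation_X K q i
  -- S applied to X i ^ d equals D applied to it
  have hSpow : ∀ i, S (X i ^ d) = ↑(D (u i)) := by
    intro i
    rw [Derivation.leibniz_pow, hSX, smul_eq_mul]
    rw [hqdef]
    simp only []
    rw [mul_smul_comm, ← Nat.cast_smul_eq_nsmul K, smul_smul, mul_inv_cancel₀ hd0, one_smul]
    exact (hq' i).symm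
  -- closure lemmas for the agreement set
  have hmul : ∀ (a b : veronese K n d), S ↑a = ↑(D a) → S ↑b = ↑(D b) →
      S ↑(a*b) = ↑(D (a*b)) := by
    intro a b ha hb
    rw [MulMemClass.coe_mul, Derivation.leibniz, smul_eq_mul, smul_eq_mul, ha, hb,
      Derivation.leibniz]
    push_cast [smul_eq_mul]
    ring
  have hone : S ↑(1 : veronese K n d) = ↑(D 1) := by
    rw [Derivation.map_one_eq_zero]
    push_cast
    rw [Derivation.map_one_eq_zero]
  have hpow : ∀ (a : veronese K n d), S ↑a = ↑(D a) → ∀ k, S ↑(a^k) = ↑(D (a^k)) := by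
    intro a ha k
    induction k with
    | zero => simpa using hone
    | succ k ih => rw [pow_succ]; exact hmul _ _ ih ha
  have hcancel : ∀ (a : veronese K n d), (↑a : MvPolynomial (Fin n) K) ≠ 0 →
      S ↑(a^d) = ↑(D (a^d)) → S ↑a = ↑(D a) := by
    intro a ha h
    rw [SubmonoidClass.coe_pow, Derivation.leibniz_pow, Derivation.leibniz_pow] at h
    have h2 : (d:K) • ((↑a : MvPolynomial (Fin n) K)^(d-1) * S ↑a)
        = (d:K) • ((↑a : MvPolynomial (Fin n) K)^(d-1) * ↑(D a)) := by
      rw [Nat.cast_smul_eq_nsmul, Nat.cast_smul_eq_nsmul]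
      rw [smul_eq_mul] at h
      rw [h]
      push_cast [smul_eq_mul]
      ring_nf
    have h3 := smul_right_injective (MvPolynomial (Fin n) K) hd0 h2
    exact mul_left_cancel₀ (pow_ne_zero _ ha) h3
  -- agreement on monomials of degree exactly d
  have hmonod : ∀ (m : Fin n →₀ ℕ), mdeg m = d →
      ∀ (hm : (monomial m (1:K) : MvPolynomial (Fin n) K) ∈ veronese K n d),
      S (monomial m 1) = ↑(D ⟨monomial m 1, hm⟩) := by
    intro m hmd hm
    set M : veronese K n d := ⟨monomial m 1, hm⟩ with hM
    have hMne : (↑M : MvPolynomial (Fin n) K) ≠ 0 := by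
      simp [hM, MvPolynomial.monomial_eq_zero]
    have hMd : M ^ d = ∏ i ∈ m.support, (u i)^(m i) := by
      apply Subtype.ext
      rw [coe_veronese_prod]
      rw [SubmonoidClass.coe_pow]
      have e1 : (↑M : MvPolynomial (Fin n) K) = ∏ i ∈ m.support, X i ^ m i := by
        rw [hM]
        show (monomial m (1:K) : MvPolynomial (Fin n) K) = _
        rw [monomial_eq]
        simp [Finsupp.prod]
      rw [e1, ← Finset.prod_pow]
      refine Finset.prod_congr rfl fun i _ => ?_
      show (X i ^ m i) ^ d = ((u i : MvPolynomial (Fin n) K)) ^ m i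
      show _ = ((X i ^ d : MvPolynomial (Fin n) K)) ^ m i
      rw [← pow_mul, ← pow_mul, mul_comm]
    apply hcancel M hMne
    rw [hMd]
    refine Finset.prod_induction _ (fun x : veronese K n d => S ↑x = ↑(D x)) (fun a b ha hb => hmul a b ha hb)
      hone ?_
    intro i _
    exact hpow (u i) (hSpow i) (m i)
  -- agreement on all monomials in the Veronese
  have hmono : ∀ (k : ℕ) (m : Fin n →₀ ℕ) (c : K), mdeg m = k →
      ∀ (hm : (monomial m c : MvPolynomial (Fin n) K) ∈ veronese K n d),
      S (monomial m c) = ↑(D ⟨monomial m c, hm⟩) := by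
    intro k
    induction k using Nat.strong_induction_on with
    | _ k ih =>
      intro m c hk hm
      by_cases hc : c = 0
      · subst hc
        have e0 : (⟨monomial m (0:K), hm⟩ : veronese K n d) = 0 := Subtype.ext (by simp)
        rw [e0, map_zero]
        simp
      · have hmd : mdeg m % d = 0 := by
          have := hm m (by rw [MvPolynomial.support_monomial, if_neg hc]; exact Finset.mem_singleton_self m)
          simpa using this
        rcases Nat.eq_zero_or_pos k with hk0 | hkpos
        · subst hk0
          have hm0 : m = 0 := mdeg_eq_zero hk
          subst hm0
          have e1 : (monomial (0 : Fin n →₀ ℕ) c : MvPolynomial (Fin n) K)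
              = algebraMap K (MvPolynomial (Fin n) K) c := by
            simp [MvPolynomial.algebraMap_eq]
          have e2 : (⟨monomial 0 c, hm⟩ : veronese K n d) = algebraMap K (veronese K n d) c :=
            Subtype.ext (by simpa using e1)
          rw [e2, Derivation.map_algebraMap, e1, Derivation.map_algebraMap]
          simp
        · have hdvdk : d ∣ k := Nat.dvd_of_mod_eq_zero (hk ▸ hmd)
          have hdk : d ≤ k := Nat.le_of_dvd hkpos hdvdk
          obtain ⟨a, ham, hamd⟩ := exists_le_mdeg d m (by omega)
          set b := m - a with hb
          have hab : m = a + b := by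
            rw [hb, add_tsub_cancel_of_le ham]
          have hbdeg : mdeg b = k - d := by
            have := mdeg_add a b
            rw [← hab, hk] at this
            omega
          have ha' : (monomial a (1:K) : MvPolynomial (Fin n) K) ∈ veronese K n d :=
            mem_veronese_monomial a 1 (by rw [hamd, Nat.mod_self])
          have hb' : (monomial b c : MvPolynomial (Fin n) K) ∈ veronese K n d := by
            apply mem_veronese_monomial
            rw [hbdeg]
            exact Nat.mod_eq_zero_of_dvd (Nat.dvd_sub hdvdk dvd_rfl)
          have hprod : (⟨monomial m c, hm⟩ : veronese K n d)
              = ⟨monomial a 1, ha'⟩ * ⟨monomial b c, hb'⟩ := by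
            apply Subtype.ext
            rw [MulMemClass.coe_mul]
            show (monomial m c : MvPolynomial (Fin n) K) = monomial a 1 * monomial b c
            rw [monomial_mul, one_mul, ← hab]
          rw [hprod]
          have hcoe : ((⟨monomial a 1, ha'⟩ * ⟨monomial b c, hb'⟩ : veronese K n d) :
              MvPolynomial (Fin n) K) = monomial m c := by
            rw [MulMemClass.coe_mul]
            show monomial a (1:K) * monomial b c = _
            rw [monomial_mul, one_mul, ← hab]
          rw [← hcoe]
          exact hmul _ _ (hmonod a hamd ha') (ih (k - d) (by omega) b c hbdeg hb')
  -- agreement everywhere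
  have hsum : ∀ (s : Finset (Fin n →₀ ℕ)) (f : MvPolynomial (Fin n) K)
      (hf : f ∈ veronese K n d), f.support ⊆ s → S f = ↑(D ⟨f, hf⟩) := by
    intro s
    induction s using Finset.induction_on with
    | empty =>
      intro f hf hsupp
      have hf0 : f = 0 := by
        rwa [Finset.subset_empty, MvPolynomial.support_eq_empty] at hsupp
      subst hf0
      rw [show (⟨(0:MvPolynomial (Fin n) K), hf⟩ : veronese K n d) = 0 from rfl]
      simp
    | @insert m s hms ih =>
      intro f hf hsupp
      set c := coeff m f with hc
      have hgmem : (monomial m c : MvPolynomial (Fin n) K) ∈ veronese K n d := by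
        by_cases hc0 : c = 0
        · rw [hc0, monomial_zero]; exact zero_mem _
        · exact mem_veronese_monomial m c (by
            have := hf m (MvPolynomial.mem_support_iff.mpr hc0)
            simpa using this)
      set g := f - monomial m c with hg
      have hgmem' : g ∈ veronese K n d := sub_mem hf hgmem
      have hgsupp : g.support ⊆ s := by
        intro m' hm'
        have hm'ne : m' ≠ m := by
          intro hmm
          subst hmm
          have : coeff m' g = 0 := by rw [hg]; simp [hc]
          exact MvPolynomial.mem_support_iff.mp hm' this
        have : coeff m' g = coeff m' f := by
          rw [hg]
          simp [MvPolynomial.coeff_monomial, Ne.symm hm'ne]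
        have hmem : m' ∈ f.support := by
          rw [MvPolynomial.mem_support_iff, ← this]
          exact MvPolynomial.mem_support_iff.mp hm'
        rcases Finset.mem_insert.mp (hsupp hmem) with h | h
        · exact absurd h hm'ne
        · exact h
      have hfg : f = monomial m c + g := by rw [hg]; ring
      have e : (⟨f, hf⟩ : veronese K n d) = ⟨monomial m c, hgmem⟩ + ⟨g, hgmem'⟩ :=
        Subtype.ext (by rw [AddMemClass.coe_add]; exact hfg)
      rw [e, map_add]
      push_cast
      rw [show S f = S (monomial m c) + S g from by rw [← map_add]; exact congrArg S hfg]
      rw [hmono (mdeg m) m c rfl hgmem, ih g hgmem' hgsupp]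
  have hext : ∀ a : veronese K n d, S ↑a = ↑(D a) := by
    intro a
    have := hsum (a : MvPolynomial (Fin n) K).support a a.2 Finset.Subset.rfl
    simpa using this
  -- uniqueness
  have huniq : ∀ S₂ : Derivation K (MvPolynomial (Fin n) K) (MvPolynomial (Fin n) K),
      (∀ a : veronese K n d, S₂ ↑a = ↑(D a)) → S₂ = S := by
    intro S₂ h₂
    apply derivation_ext
    intro i
    have ha : S₂ (X i ^ d) = S (X i ^ d) := by
      rw [hSpow i, ← h₂ (u i)]
    rw [Derivation.leibniz_pow, Derivation.leibniz_pow, smul_eq_mul, smul_eq_mul,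
      ← Nat.cast_smul_eq_nsmul K, ← Nat.cast_smul_eq_nsmul K] at ha
    have h3 := smul_right_injective (MvPolynomial (Fin n) K) hd0 ha
    exact mul_left_cancel₀ (pow_ne_zero _ (MvPolynomial.X_ne_zero i)) h3
  -- gradedness
  have hgrade : ∀ i : Fin n, q i ∈ comp K n d 1 := by
    intro i
    have hq'mem : q' i ∈ comp K n d 1 := by
      intro m hm
      have hDmem : (↑(D (u i)) : MvPolynomial (Fin n) K) ∈ comp K n d 0 := (D (u i)).2
      have hsup : Finsupp.single i (d-1) + m ∈ (↑(D (u i)) : MvPolynomial (Fin n) K).support := by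
        rw [hq' i, X_pow_eq_monomial, MvPolynomial.mem_support_iff,
          MvPolynomial.coeff_monomial_mul, one_mul]
        exact MvPolynomial.mem_support_iff.mp hm
      have := hDmem _ hsup
      rw [mdeg_add, mdeg_single] at this
      simp only [Nat.zero_mod] at this
      exact mod_step hd this
    exact Submodule.smul_mem _ _ hq'mem
  refine ⟨⟨S, hext, huniq⟩, ?_⟩
  intro S₂ h₂ i
  rw [show S₂ = S from huniq S₂ h₂, hSX i]
  exact hgrade i
end

section
/- Let K be a field, let d ≥ 2 and n ≥ 2 be integers, let A = K[x_1,…,x_n], and let A_0 be the Veronese subalgebra of A of degree d. If β is a d-graded K-algebra automorphism of A whose restriction to A_0 is the identity map, then there exists λ ∈ K with λ^d = 1 such that β(x_i) = λ x_i for all i = 1,…,n. -/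
set_option synthInstance.maxHeartbeats 1000000
set_option maxHeartbeats 1000000

open MvPolynomial

lemma eq_C_of_mul_eq_one {K : Type} [Field K] {n : ℕ} {g h : MvPolynomial (Fin n) K}
    (hgh : g * h = 1) : ∃ c : K, g = MvPolynomial.C c := by
  classical
  have hg : g ≠ 0 := by rintro rfl; simp at hgh
  have hh : h ≠ 0 := by rintro rfl; simp at hgh
  have hmul := AddMonoidAlgebra.supDegree_mul (D := (toLex : (Fin n →₀ ℕ) → Lex (Fin n →₀ ℕ)))
    toLex.injective (fun _ _ => rfl)
    (mul_ne_zero ((AddMonoidAlgebra.leadingCoeff_ne_zero toLex.injective).mpr hg)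
      ((AddMonoidAlgebra.leadingCoeff_ne_zero toLex.injective).mpr hh)) hg hh
  rw [hgh] at hmul
  have hone : AddMonoidAlgebra.supDegree (toLex : (Fin n →₀ ℕ) → Lex (Fin n →₀ ℕ))
      (1 : MvPolynomial (Fin n) K) = toLex 0 :=
    AddMonoidAlgebra.supDegree_single_ne_zero 0 one_ne_zero
  rw [hone] at hmul
  -- supDegree g = toLex 0
  have hzero : ofLex (AddMonoidAlgebra.supDegree (toLex : (Fin n →₀ ℕ) → Lex (Fin n →₀ ℕ)) g)
      + ofLex (AddMonoidAlgebra.supDegree (toLex : (Fin n →₀ ℕ) → Lex (Fin n →₀ ℕ)) h) = 0 :=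
    congrArg ofLex hmul.symm
  have hsg : AddMonoidAlgebra.supDegree (toLex : (Fin n →₀ ℕ) → Lex (Fin n →₀ ℕ)) g = toLex 0 := by
    have := (add_eq_zero_iff_of_nonneg zero_le zero_le).mp hzero
    exact congrArg toLex this.1
  have hsupp : g.support ⊆ {0} := by
    intro m hm
    have hle : toLex m ≤ toLex (0 : Fin n →₀ ℕ) := hsg ▸ Finset.le_sup (f := toLex) hm
    have hge : toLex (0 : Fin n →₀ ℕ) ≤ toLex m := Finsupp.toLex_monotone bot_le
    have : toLex m = toLex 0 := le_antisymm hle hge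
    simpa using toLex.injective this
  refine ⟨MvPolynomial.coeff 0 g, ?_⟩
  ext m
  rcases eq_or_ne m 0 with rfl | hm
  · simp
  · rw [MvPolynomial.coeff_C, if_neg (Ne.symm hm)]
    by_contra hc
    exact hm (Finset.mem_singleton.mp (hsupp (MvPolynomial.mem_support_iff.mpr hc)))


lemma X_dvd_of_aeval_eq_zero {K : Type} [Field K] {n : ℕ} (i : Fin n) {p : MvPolynomial (Fin n) K}
    (hp : MvPolynomial.aeval (fun j => if j = i then 0 else MvPolynomial.X j : Fin n → MvPolynomial (Fin n) K) p = 0) :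
    MvPolynomial.X i ∣ p := by
  classical
  set φ := MvPolynomial.aeval (R := K) (fun j => if j = i then 0 else MvPolynomial.X j : Fin n → MvPolynomial (Fin n) K) with hφ
  -- every monomial of p has m i ≠ 0
  have key : ∀ m ∈ p.support, m i ≠ 0 := by
    intro m hm hmi
    have hφm : ∀ m' : Fin n →₀ ℕ, m' i = 0 →
        φ (monomial m' (coeff m' p)) = monomial m' (coeff m' p) := by
      intro m' hm'
      rw [MvPolynomial.aeval_monomial]
      rw [MvPolynomial.monomial_eq]
      congr 1
      refine Finsupp.prod_congr fun j hj => ?_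
      have : j ≠ i := by rintro rfl; exact (Finsupp.mem_support_iff.mp hj) hm'
      rw [if_neg this]
    have hφm0 : ∀ m' : Fin n →₀ ℕ, m' i ≠ 0 →
        φ (monomial m' (coeff m' p)) = 0 := by
      intro m' hm'
      rw [MvPolynomial.aeval_monomial]
      have : (m'.prod fun j k => (if j = i then 0 else MvPolynomial.X j) ^ k)
          = (0 : MvPolynomial (Fin n) K) := by
        apply Finset.prod_eq_zero (Finsupp.mem_support_iff.mpr hm')
        show (if i = i then (0:MvPolynomial (Fin n) K) else X i) ^ m' i = 0
        rw [if_pos rfl, zero_pow hm']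
      rw [this, mul_zero]
    have hsum : φ p = ∑ m' ∈ p.support.filter (fun m' => m' i = 0),
        monomial m' (coeff m' p) := by
      conv_lhs => rw [← p.support_sum_monomial_coeff, map_sum]
      rw [Finset.sum_filter]
      apply Finset.sum_congr rfl
      intro m' _
      by_cases h : m' i = 0
      · rw [if_pos h, hφm m' h]
      · rw [if_neg h, hφm0 m' h]
    have : coeff m (φ p) = coeff m p := by
      rw [hsum, MvPolynomial.coeff_sum]
      rw [Finset.sum_eq_single m]
      · simp
      · intro b hb hbm; rw [MvPolynomial.coeff_monomial, if_neg hbm]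
      · intro hnot
        exact absurd (Finset.mem_filter.mpr ⟨hm, hmi⟩) hnot
    rw [hp] at this
    exact (MvPolynomial.mem_support_iff.mp hm) (by simpa using this.symm)
  -- now p is a sum of monomials divisible by X i
  conv_rhs => rw [← p.support_sum_monomial_coeff]
  apply Finset.dvd_sum
  intro m hm
  exact MvPolynomial.X_dvd_monomial.mpr (Or.inr (key m hm))

lemma monomial_mixed_mem (K : Type) [Field K] (n d : ℕ) (hd : 2 ≤ d) (i j : Fin n) :
    (MvPolynomial.X i * MvPolynomial.X j ^ (d-1) : MvPolynomial (Fin n) K) ∈ veronese K n d := by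
  classical
  intro m hm
  rw [MvPolynomial.X_pow_eq_monomial, show (MvPolynomial.X i : MvPolynomial (Fin n) K)
      = MvPolynomial.monomial (Finsupp.single i 1) 1 from rfl,
    MvPolynomial.monomial_mul, MvPolynomial.support_monomial] at hm
  simp only [mul_one, one_ne_zero, if_false, Finset.mem_singleton] at hm
  subst hm
  rw [mdeg_add]
  have h1 : mdeg (Finsupp.single i 1) = 1 := by simp [mdeg]
  have h2 : mdeg (Finsupp.single j (d-1)) = d - 1 := Finsupp.sum_single_index rfl
  rw [h1, h2, show 1 + (d - 1) = d by omega, Nat.mod_self, Nat.zero_mod]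

/-- a `d`-graded automorphism of `A = K[x₁,…,xₙ]` restricting to the identity
on the Veronese subalgebra `A₀` is of the form `xᵢ ↦ λxᵢ` with `λ^d = 1`. -/
theorem stmt4 (K : Type) [Field K] (n d : ℕ) (hn : 2 ≤ n) (hd : 2 ≤ d)
    (β : MvPolynomial (Fin n) K ≃ₐ[K] MvPolynomial (Fin n) K)
    (hgr : ∀ i : Fin n, β (MvPolynomial.X i) ∈ comp K n d 1)
    (hid : ∀ a ∈ veronese K n d, β a = a) :
    ∃ lam : K, lam ^ d = 1 ∧
      ∀ i : Fin n, β (MvPolynomial.X i) = MvPolynomial.C lam * MvPolynomial.X i := by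
  classical
  have hd0 : d ≠ 0 := by omega
  have hdd : d - 1 + 1 = d := by omega
  have key : ∀ i : Fin n, ∃ c : K, c ^ d = 1 ∧ β (MvPolynomial.X i) = MvPolynomial.C c * MvPolynomial.X i := by
    intro i
    have h1 : β (MvPolynomial.X i) ^ d = MvPolynomial.X i ^ d := by
      have := hid (MvPolynomial.X i ^ d) (X_pow_mem K n d i)
      rwa [map_pow] at this
    have hφ : MvPolynomial.aeval
        (fun j => if j = i then 0 else MvPolynomial.X j : Fin n → MvPolynomial (Fin n) K)
        (β (MvPolynomial.X i)) = 0 := by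
      have h2 : (MvPolynomial.aeval
          (fun j => if j = i then 0 else MvPolynomial.X j : Fin n → MvPolynomial (Fin n) K)
          (β (MvPolynomial.X i))) ^ d = 0 := by
        rw [← map_pow, h1, map_pow, MvPolynomial.aeval_X, if_pos rfl, zero_pow hd0]
      exact pow_eq_zero_iff hd0 |>.mp h2
    obtain ⟨g, hg⟩ := X_dvd_of_aeval_eq_zero i hφ
    have hXd : (MvPolynomial.X i : MvPolynomial (Fin n) K) ^ d ≠ 0 :=
      pow_ne_zero _ (MvPolynomial.X_ne_zero i)
    have hgd : g ^ d = 1 := by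
      have h3 : MvPolynomial.X i ^ d * g ^ d = MvPolynomial.X i ^ d * 1 := by
        rw [mul_one, ← mul_pow, ← hg, h1]
      exact mul_left_cancel₀ hXd h3
    obtain ⟨c, hc⟩ := eq_C_of_mul_eq_one (g := g) (h := g ^ (d-1))
      (by rw [← pow_succ', hdd, hgd])
    refine ⟨c, ?_, ?_⟩
    · have : MvPolynomial.C (c ^ d) = (MvPolynomial.C (1:K) : MvPolynomial (Fin n) K) := by
        rw [map_pow, ← hc, hgd, map_one]
      exact MvPolynomial.C_injective (Fin n) K this
    · rw [hg, hc, mul_comm]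
  choose lam hlam1 hlam2 using key
  set i0 : Fin n := ⟨0, by omega⟩
  refine ⟨lam i0, hlam1 i0, fun i => ?_⟩
  have hM : (MvPolynomial.X i * MvPolynomial.X i0 ^ (d-1) : MvPolynomial (Fin n) K) ≠ 0 :=
    mul_ne_zero (MvPolynomial.X_ne_zero i) (pow_ne_zero _ (MvPolynomial.X_ne_zero i0))
  have hfix := hid _ (monomial_mixed_mem K n d hd i i0)
  rw [map_mul, map_pow, hlam2 i, hlam2 i0] at hfix
  have hfix2 : MvPolynomial.C (lam i * lam i0 ^ (d-1)) *
      (MvPolynomial.X i * MvPolynomial.X i0 ^ (d-1) : MvPolynomial (Fin n) K)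
      = MvPolynomial.C 1 * (MvPolynomial.X i * MvPolynomial.X i0 ^ (d-1)) := by
    have hexp : MvPolynomial.C (lam i * lam i0 ^ (d-1)) *
        (MvPolynomial.X i * MvPolynomial.X i0 ^ (d-1) : MvPolynomial (Fin n) K)
        = MvPolynomial.C (lam i) * MvPolynomial.X i *
          (MvPolynomial.C (lam i0) * MvPolynomial.X i0) ^ (d-1) := by
      rw [mul_pow, map_mul, map_pow]
      ring
    rw [map_one, one_mul, hexp, hfix]
  have hscal : lam i * lam i0 ^ (d-1) = 1 :=
    MvPolynomial.C_injective (Fin n) K (mul_right_cancel₀ hM hfix2)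
  have hlami : lam i = lam i0 := by
    have h4 : lam i0 ^ (d-1) * lam i0 = 1 := by
      rw [← pow_succ, hdd, hlam1 i0]
    calc lam i = lam i * (lam i0 ^ (d-1) * lam i0) := by rw [h4, mul_one]
    _ = (lam i * lam i0 ^ (d-1)) * lam i0 := by ring
    _ = lam i0 := by rw [hscal, one_mul]
  rw [hlam2 i, hlami]
end

section
/- Let K be a field of characteristic zero, let d ≥ 2 be an integer, and let K[x] be the polynomial algebra in one variable. Then there is no K-algebra automorphism φ of K[x] with φ(x^d) = x^d + 1 (equivalently, there is no automorphism φ with φ(x)^d = x^d + 1). Consequently, the automorphism of the Veronese subalgebra K[x^d] determined by x^d ↦ x^d + 1 is not induced by any automorphism of K[x]. -/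
open Polynomial

lemma no_pow (K : Type) [Field K] [CharZero K] (d : ℕ) (hd : 2 ≤ d) (p : K[X]) :
    p ^ d ≠ X ^ d + 1 := by
  intro h
  have hd0 : 0 < d := by omega
  have hp0 : p ≠ 0 := by
    intro hp; rw [hp, zero_pow hd0.ne'] at h
    have := congrArg (fun q => Polynomial.eval 0 q) h
    simp [zero_pow hd0.ne'] at this
  have hdeg : p.natDegree = 1 := by
    have h1 : (p ^ d).natDegree = d := by
      rw [h]
      have : (X ^ d + 1 : K[X]) = X ^ d + C 1 := by simp
      rw [this, natDegree_X_pow_add_C]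
    rw [natDegree_pow] at h1
    nlinarith
  have ha : p.coeff 1 ≠ 0 := by
    intro ha
    have := p.natDegree_eq_zero_iff_degree_le_zero
    have : p.coeff p.natDegree ≠ 0 := by
      rw [← leadingCoeff]; exact leadingCoeff_ne_zero.mpr hp0
    rw [hdeg] at this; exact this ha
  -- derivative
  have hder : C (d : K) * p ^ (d - 1) * derivative p = C (d : K) * X ^ (d - 1) := by
    have := congrArg derivative h
    rwa [derivative_pow, derivative_add, derivative_one, derivative_X_pow, add_zero,
      map_natCast] at this
  have hkey : C (d : K) * (X ^ d + 1) * derivative p = C (d : K) * X ^ (d - 1) * p := by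
    have := congrArg (· * p) hder
    calc C (d : K) * (X ^ d + 1) * derivative p
        = C (d : K) * p ^ d * derivative p := by rw [h]
      _ = C (d : K) * p ^ (d - 1) * derivative p * p := by
          ring_nf
          rw [show p ^ d = p ^ (d-1) * p by rw [← pow_succ]; congr 1; omega]
          ring
      _ = C (d : K) * X ^ (d - 1) * p := this
  have hd0' : (d : K) ≠ 0 := Nat.cast_ne_zero.mpr hd0.ne'
  have hkey2 : (X ^ d + 1) * derivative p = X ^ (d - 1) * p := by
    apply mul_left_cancel₀ (a := (C (d : K))) (by simpa using hd0')
    rw [← mul_assoc, ← mul_assoc]; exact hkey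
  have := congrArg (Polynomial.eval 0) hkey2
  simp only [eval_mul, eval_add, eval_pow, eval_X, eval_one] at this
  rw [zero_pow hd0.ne', zero_pow (by omega : d - 1 ≠ 0)] at this
  simp only [zero_add, one_mul, zero_mul] at this
  -- eval of derivative at 0 is coeff 1
  have hev : Polynomial.eval 0 (derivative p) = p.coeff 1 := by
    rw [eval_eq_sum_range]
    rcases Nat.eq_zero_or_pos (derivative p).natDegree with h0 | hpos
    · simp [h0, coeff_derivative]
    · rw [Finset.sum_eq_single 0]
      · simp [coeff_derivative]
      · intro b _ hb; simp [zero_pow hb]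
      · simp
  rw [hev] at this
  exact ha this
set_option synthInstance.maxHeartbeats 1000000
set_option maxHeartbeats 1000000

/-- over a field `K` of characteristic zero and `d ≥ 2` there is no
`K`-algebra automorphism `φ` of `K[x]` with `φ(x^d) = x^d + 1` (equivalently with
`φ(x)^d = x^d + 1`); consequently the automorphism of the Veronese subalgebra `K[x^d]`
determined by `x^d ↦ x^d + 1` is not induced by any automorphism of `K[x]`. -/
theorem stmt6 (K : Type) [Field K] [CharZero K] (d : ℕ) (hd : 2 ≤ d) :
    (¬ ∃ φ : Polynomial K ≃ₐ[K] Polynomial K,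
        φ (Polynomial.X ^ d) = Polynomial.X ^ d + 1) ∧
    (¬ ∃ φ : Polynomial K ≃ₐ[K] Polynomial K,
        (φ Polynomial.X) ^ d = Polynomial.X ^ d + 1) ∧
    (∀ α : Algebra.adjoin K {(Polynomial.X : Polynomial K) ^ d} ≃ₐ[K]
        Algebra.adjoin K {(Polynomial.X : Polynomial K) ^ d},
      ((α ⟨Polynomial.X ^ d, Algebra.subset_adjoin (Set.mem_singleton _)⟩ :
          Algebra.adjoin K {(Polynomial.X : Polynomial K) ^ d}) : Polynomial K)
        = Polynomial.X ^ d + 1 →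
      ¬ ∃ φ : Polynomial K ≃ₐ[K] Polynomial K,
          ∀ a : Algebra.adjoin K {(Polynomial.X : Polynomial K) ^ d}, φ ↑a = ↑(α a)) := by
  have core : ∀ φ : Polynomial K ≃ₐ[K] Polynomial K,
      φ (Polynomial.X ^ d) ≠ Polynomial.X ^ d + 1 := by
    intro φ hφ
    rw [map_pow] at hφ
    exact no_pow K d hd _ hφ
  refine ⟨fun ⟨φ, hφ⟩ => core φ hφ, fun ⟨φ, hφ⟩ => core φ (by rw [map_pow]; exact hφ), ?_⟩
  intro α hα ⟨φ, hφ⟩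
  have := hφ ⟨Polynomial.X ^ d, Algebra.subset_adjoin (Set.mem_singleton _)⟩
  rw [hα] at this
  exact core φ this
end

section
/- Let K be a field of characteristic zero and let B = K⟨x,y⟩ be the free associative algebra on two generators x, y. Then there is no K-derivation D : B → B satisfying D(x·x) = 1, D(x·y) = 0, D(y·x) = 0, and D(y·y) = 0. Consequently, the locally nilpotent derivation of the Veronese subalgebra B_0 of degree 2 (the free associative algebra on x², xy, yx, y²) determined by x² ↦ 1, xy ↦ 0, yx ↦ 0, y² ↦ 0 is not induced by any derivation of B. -/
set_option synthInstance.maxHeartbeats 1000000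
set_option maxHeartbeats 1000000

/-- The Veronese subalgebra of degree 2 of the free associative algebra `K⟨x,y⟩`:
the subalgebra generated by `x², xy, yx, y²`. -/
def B0 (K : Type) [Field K] : Subalgebra K (FreeAlgebra K (Fin 2)) :=
  Algebra.adjoin K
    ({FreeAlgebra.ι K 0 * FreeAlgebra.ι K 0, FreeAlgebra.ι K 0 * FreeAlgebra.ι K 1,
      FreeAlgebra.ι K 1 * FreeAlgebra.ι K 0, FreeAlgebra.ι K 1 * FreeAlgebra.ι K 1} :
      Set (FreeAlgebra K (Fin 2)))

lemma xx_mem (K : Type) [Field K] : FreeAlgebra.ι K 0 * FreeAlgebra.ι K 0 ∈ B0 K :=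
  Algebra.subset_adjoin (Set.mem_insert _ _)

lemma xy_mem (K : Type) [Field K] : FreeAlgebra.ι K 0 * FreeAlgebra.ι K 1 ∈ B0 K :=
  Algebra.subset_adjoin (Set.mem_insert_of_mem _ (Set.mem_insert _ _))

lemma yx_mem (K : Type) [Field K] : FreeAlgebra.ι K 1 * FreeAlgebra.ι K 0 ∈ B0 K :=
  Algebra.subset_adjoin (Set.mem_insert_of_mem _ (Set.mem_insert_of_mem _ (Set.mem_insert _ _)))

lemma yy_mem (K : Type) [Field K] : FreeAlgebra.ι K 1 * FreeAlgebra.ι K 1 ∈ B0 K :=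
  Algebra.subset_adjoin (Set.mem_insert_of_mem _ (Set.mem_insert_of_mem _
    (Set.mem_insert_of_mem _ (Set.mem_singleton _))))


lemma no_such_D (K : Type) [Field K]
    (D : FreeAlgebra K (Fin 2) →ₗ[K] FreeAlgebra K (Fin 2))
    (hL : ∀ u v : FreeAlgebra K (Fin 2), D (u * v) = D u * v + u * D v)
    (h : D (FreeAlgebra.ι K 0 * FreeAlgebra.ι K 0) = 1) : False := by
  set ε : FreeAlgebra K (Fin 2) →ₐ[K] K := FreeAlgebra.lift K (fun _ => (0 : K)) with hε
  have hx : ε (FreeAlgebra.ι K 0) = 0 := by simp [hε]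
  have h2 : ε (D (FreeAlgebra.ι K 0 * FreeAlgebra.ι K 0)) = 1 := by rw [h]; simp
  rw [hL] at h2
  rw [map_add, map_mul, map_mul, hx] at h2
  simp at h2

/-- there is no `K`-derivation `D` of the free associative algebra
`B = K⟨x,y⟩` with `D(x²) = 1`, `D(xy) = 0`, `D(yx) = 0`, `D(y²) = 0`; consequently
the locally nilpotent derivation of the Veronese subalgebra `B₀` determined by these
values is not induced by any derivation of `B`. -/
theorem stmt7 (K : Type) [Field K] [CharZero K] :
    (¬ ∃ D : FreeAlgebra K (Fin 2) →ₗ[K] FreeAlgebra K (Fin 2),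
      (∀ u v : FreeAlgebra K (Fin 2), D (u * v) = D u * v + u * D v) ∧
      D (FreeAlgebra.ι K 0 * FreeAlgebra.ι K 0) = 1 ∧
      D (FreeAlgebra.ι K 0 * FreeAlgebra.ι K 1) = 0 ∧
      D (FreeAlgebra.ι K 1 * FreeAlgebra.ι K 0) = 0 ∧
      D (FreeAlgebra.ι K 1 * FreeAlgebra.ι K 1) = 0) ∧
    (∀ D₀ : B0 K →ₗ[K] B0 K,
      (∀ u v : B0 K, D₀ (u * v) = D₀ u * v + u * D₀ v) →
      ((D₀ ⟨_, xx_mem K⟩ : B0 K) : FreeAlgebra K (Fin 2)) = 1 →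
      ((D₀ ⟨_, xy_mem K⟩ : B0 K) : FreeAlgebra K (Fin 2)) = 0 →
      ((D₀ ⟨_, yx_mem K⟩ : B0 K) : FreeAlgebra K (Fin 2)) = 0 →
      ((D₀ ⟨_, yy_mem K⟩ : B0 K) : FreeAlgebra K (Fin 2)) = 0 →
      ¬ ∃ D : FreeAlgebra K (Fin 2) →ₗ[K] FreeAlgebra K (Fin 2),
          (∀ u v : FreeAlgebra K (Fin 2), D (u * v) = D u * v + u * D v) ∧
          ∀ b : B0 K, D ↑b = ↑(D₀ b)) := by
  constructor
  · rintro ⟨D, hL, h1, -, -, -⟩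
    exact no_such_D K D hL h1
  · intro D₀ hL0 h1 h2 h3 h4
    rintro ⟨D, hL, hcomm⟩
    apply no_such_D K D hL
    have := hcomm ⟨_, xx_mem K⟩
    rw [this, h1]
end

section
/- Let K be a field of characteristic zero and let B = K⟨x,y⟩ be the free associative algebra on two generators x, y. Then there is no K-algebra automorphism φ of B satisfying φ(x·x) = x·x + 1, φ(x·y) = x·y, φ(y·x) = y·x, and φ(y·y) = y·y. Consequently, the automorphism of the Veronese subalgebra B_0 of degree 2 determined by x² ↦ x² + 1, xy ↦ xy, yx ↦ yx, y² ↦ y² is not induced by any automorphism of B. -/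
set_option synthInstance.maxHeartbeats 1000000
set_option maxHeartbeats 1000000

open Polynomial in
lemma no_sqrt_aux (K : Type) [Field K] [CharZero K] (p : Polynomial K) :
    p * p ≠ X ^ 2 + 1 := by
  intro h
  have hder : derivative (p * p) = derivative ((X : K[X]) ^ 2 + 1) := by rw [h]
  rw [derivative_mul, derivative_add, derivative_X_pow, derivative_one, add_zero] at hder
  have h2 : p * (2 * derivative p) = C 2 * X := by
    rw [show p * (2 * derivative p) = derivative p * p + p * derivative p by ring, hder]
    norm_num
  have hdvdX : p ∣ (X : K[X]) := by
    refine ⟨C (2⁻¹) * (2 * derivative p), ?_⟩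
    have h20 : (2 : K) ≠ 0 := two_ne_zero
    calc (X : K[X]) = C (2⁻¹) * (C 2 * X) := by
          rw [← mul_assoc, ← C_mul, inv_mul_cancel₀ h20, C_1, one_mul]
      _ = C (2⁻¹) * (p * (2 * derivative p)) := by rw [h2]
      _ = p * (C (2⁻¹) * (2 * derivative p)) := by ring
  have hdvd1 : p ∣ 1 := by
    have hA : p ∣ X * X := hdvdX.mul_right X
    have hB : p ∣ X ^ 2 + 1 := h ▸ dvd_mul_right p p
    have h1 : (1 : K[X]) = (X ^ 2 + 1) - X * X := by ring
    rw [h1]; exact dvd_sub hB hA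
  have hu : IsUnit p := isUnit_of_dvd_one hdvd1
  have hdeg : (p * p).natDegree = ((X : K[X]) ^ 2 + 1).natDegree := by rw [h]
  have h0 : p.natDegree = 0 := natDegree_eq_zero_of_isUnit hu
  have : ((X : K[X]) ^ 2 + 1).natDegree = 2 := by compute_degree!
  have hle : (p * p).natDegree ≤ 0 := le_trans (natDegree_mul_le) (by omega)
  omega

open Polynomial in
lemma key_aux (K : Type) [Field K] [CharZero K] :
    ¬ ∃ φ : FreeAlgebra K (Fin 2) ≃ₐ[K] FreeAlgebra K (Fin 2),
      φ (FreeAlgebra.ι K 0 * FreeAlgebra.ι K 0) = FreeAlgebra.ι K 0 * FreeAlgebra.ι K 0 + 1 := by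
  rintro ⟨φ, hxx⟩
  let ψ : FreeAlgebra K (Fin 2) →ₐ[K] Polynomial K :=
    FreeAlgebra.lift K (fun i => if i = 0 then X else 0)
  have hψx : ψ (FreeAlgebra.ι K 0) = X := by simp [ψ, FreeAlgebra.lift_ι_apply]
  have h1 := congrArg ψ hxx
  simp only [map_mul, map_add, map_one, hψx] at h1
  refine no_sqrt_aux K (ψ (φ (FreeAlgebra.ι K 0))) ?_
  rw [h1]; ring

/-- there is no `K`-algebra automorphism `φ` of the free associative algebra
`B = K⟨x,y⟩` with `φ(x²) = x² + 1`, `φ(xy) = xy`, `φ(yx) = yx`, `φ(y²) = y²`; consequently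
the automorphism of the Veronese subalgebra `B₀` determined by these values is not
induced by any automorphism of `B`. -/
theorem stmt8 (K : Type) [Field K] [CharZero K] :
    (¬ ∃ φ : FreeAlgebra K (Fin 2) ≃ₐ[K] FreeAlgebra K (Fin 2),
      φ (FreeAlgebra.ι K 0 * FreeAlgebra.ι K 0) = FreeAlgebra.ι K 0 * FreeAlgebra.ι K 0 + 1 ∧
      φ (FreeAlgebra.ι K 0 * FreeAlgebra.ι K 1) = FreeAlgebra.ι K 0 * FreeAlgebra.ι K 1 ∧
      φ (FreeAlgebra.ι K 1 * FreeAlgebra.ι K 0) = FreeAlgebra.ι K 1 * FreeAlgebra.ι K 0 ∧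
      φ (FreeAlgebra.ι K 1 * FreeAlgebra.ι K 1) = FreeAlgebra.ι K 1 * FreeAlgebra.ι K 1) ∧
    (∀ α : B0 K ≃ₐ[K] B0 K,
      ((α ⟨_, xx_mem K⟩ : B0 K) : FreeAlgebra K (Fin 2))
        = FreeAlgebra.ι K 0 * FreeAlgebra.ι K 0 + 1 →
      ((α ⟨_, xy_mem K⟩ : B0 K) : FreeAlgebra K (Fin 2))
        = FreeAlgebra.ι K 0 * FreeAlgebra.ι K 1 →
      ((α ⟨_, yx_mem K⟩ : B0 K) : FreeAlgebra K (Fin 2))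
        = FreeAlgebra.ι K 1 * FreeAlgebra.ι K 0 →
      ((α ⟨_, yy_mem K⟩ : B0 K) : FreeAlgebra K (Fin 2))
        = FreeAlgebra.ι K 1 * FreeAlgebra.ι K 1 →
      ¬ ∃ φ : FreeAlgebra K (Fin 2) ≃ₐ[K] FreeAlgebra K (Fin 2),
          ∀ b : B0 K, φ ↑b = ↑(α b)) := by
  refine ⟨fun ⟨φ, hxx, _, _, _⟩ => key_aux K ⟨φ, hxx⟩, ?_⟩
  intro α hxx _ _ _ ⟨φ, hφ⟩
  refine key_aux K ⟨φ, ?_⟩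
  have := hφ ⟨_, xx_mem K⟩
  rwa [hxx] at this
end

section
/- Let K be a field containing a primitive d-th root of unity ε (where d ≥ 2 and the characteristic of K is zero or does not divide d), let n ≥ 1, and let A = K[x_1,…,x_n] with the Z_d-grading A = A_0 ⊕ … ⊕ A_{d-1}. Let ε̂ be the K-algebra automorphism of A with ε̂(x_i) = ε x_i for all i. If f_1, f_2 ∈ A are nonzero coprime polynomials such that f_1 · ε̂(f_2) = ε̂(f_1) · f_2 (equivalently, the rational function f_2/f_1 is fixed by ε̂), then each of f_1 and f_2 is d-homogeneous; that is, there exist residues i, j ∈ Z_d such that f_1 ∈ A_i and f_2 ∈ A_j. -/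
set_option synthInstance.maxHeartbeats 1000000
set_option maxHeartbeats 1000000

open MvPolynomial

lemma isUnit_const' (K : Type) [Field K] (n : ℕ) (u : MvPolynomial (Fin n) K) (hu : IsUnit u) :
    ∃ c : K, u = C c := by
  obtain ⟨v, hv⟩ := hu.exists_right_inv
  have hu0 : u ≠ 0 := fun h => by simp [h] at hv
  have hv0 : v ≠ 0 := fun h => by simp [h] at hv
  have hD : (toLex : (Fin n →₀ ℕ) → Lex (Fin n →₀ ℕ)).Injective := toLex.injective
  have hadd : ∀ a b : Fin n →₀ ℕ, toLex (a + b) = toLex a + toLex b := fun _ _ => rfl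
  have h1 : AddMonoidAlgebra.supDegree toLex (u * v) =
      AddMonoidAlgebra.supDegree toLex u + AddMonoidAlgebra.supDegree toLex v := by
    apply AddMonoidAlgebra.supDegree_mul hD hadd ?_ hu0 hv0
    exact mul_ne_zero ((AddMonoidAlgebra.leadingCoeff_eq_zero hD).not.mpr hu0)
      ((AddMonoidAlgebra.leadingCoeff_eq_zero hD).not.mpr hv0)
  rw [hv] at h1
  have h2 : AddMonoidAlgebra.supDegree toLex (1 : MvPolynomial (Fin n) K) = ⊥ := by
    rw [show (1 : MvPolynomial (Fin n) K) = AddMonoidAlgebra.single 0 1 from rfl,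
      AddMonoidAlgebra.supDegree_single]
    simp
    rfl
  rw [h2] at h1
  have h3 : AddMonoidAlgebra.supDegree toLex u = ⊥ := by
    rcases le_iff_lt_or_eq.mp (bot_le (a := AddMonoidAlgebra.supDegree toLex u)) with h | h
    · exfalso
      have : (⊥ : Lex (Fin n →₀ ℕ)) < AddMonoidAlgebra.supDegree toLex u +
          AddMonoidAlgebra.supDegree toLex v :=
        lt_of_lt_of_le h (le_add_of_nonneg_right bot_le)
      rw [← h1] at this
      exact lt_irrefl _ this
    · exact h.symm
  refine ⟨MvPolynomial.coeff 0 u, ?_⟩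
  ext m
  rcases eq_or_ne m 0 with rfl | hm
  · simp
  · rw [MvPolynomial.coeff_C, if_neg (Ne.symm hm)]
    by_contra hc
    have hms : m ∈ u.support := by rwa [MvPolynomial.mem_support_iff]
    have : toLex m ≤ AddMonoidAlgebra.supDegree toLex u := Finset.le_sup hms
    rw [h3] at this
    exact hm (hD (le_bot_iff.mp this))

lemma ehat_monomial' (K : Type) [Field K] (n : ℕ) (ε : K)
    (εhat : MvPolynomial (Fin n) K ≃ₐ[K] MvPolynomial (Fin n) K)
    (hεhat : ∀ i : Fin n, εhat (MvPolynomial.X i) = MvPolynomial.C ε * MvPolynomial.X i)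
    (m : Fin n →₀ ℕ) (a : K) :
    εhat (monomial m a) = C (ε ^ mdeg m) * monomial m a := by
  classical
  rw [monomial_eq, map_mul]
  have hC : ∀ b : K, εhat (C b) = C b := fun b => by
    simpa [MvPolynomial.algebraMap_eq] using εhat.commutes b
  rw [hC]
  rw [Finsupp.prod, map_prod]
  simp_rw [map_pow, hεhat, mul_pow, ← C_pow]
  rw [Finset.prod_mul_distrib, ← map_prod, Finset.prod_pow_eq_pow_sum]
  unfold mdeg
  rw [Finsupp.sum]
  ring

lemma coeff_ehat' (K : Type) [Field K] (n : ℕ) (ε : K)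
    (εhat : MvPolynomial (Fin n) K ≃ₐ[K] MvPolynomial (Fin n) K)
    (hεhat : ∀ i : Fin n, εhat (MvPolynomial.X i) = MvPolynomial.C ε * MvPolynomial.X i)
    (f : MvPolynomial (Fin n) K) (m : Fin n →₀ ℕ) :
    coeff m (εhat f) = ε ^ mdeg m * coeff m f := by
  classical
  conv_lhs => rw [← support_sum_monomial_coeff f]
  rw [map_sum]
  simp_rw [ehat_monomial' K n ε εhat hεhat]
  rw [coeff_sum]
  simp_rw [coeff_C_mul, coeff_monomial]
  rw [Finset.sum_eq_single m]
  · rcases eq_or_ne (coeff m f) 0 with h | h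
    · simp [h]
    · rw [if_pos rfl]
  · intro b _ hb; rw [if_neg hb, mul_zero]
  · intro h; simp [notMem_support_iff.mp h]

/-- if nonzero coprime `f₁, f₂` satisfy `f₁ · ε̂(f₂) = ε̂(f₁) · f₂` (i.e.
`f₂/f₁` is fixed by `ε̂`), then `f₁` and `f₂` are `d`-homogeneous. -/
theorem stmt10 (K : Type) [Field K] (n d : ℕ) (hn : 1 ≤ n) (hd : 2 ≤ d)
    (ε : K) (hε1 : ε ^ d = 1) (hε2 : ∀ k : ℕ, 0 < k → k < d → ε ^ k ≠ 1)
    (hchar : ringChar K = 0 ∨ ¬ ringChar K ∣ d)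
    (εhat : MvPolynomial (Fin n) K ≃ₐ[K] MvPolynomial (Fin n) K)
    (hεhat : ∀ i : Fin n, εhat (MvPolynomial.X i) = MvPolynomial.C ε * MvPolynomial.X i)
    (f₁ f₂ : MvPolynomial (Fin n) K) (hf₁ : f₁ ≠ 0) (hf₂ : f₂ ≠ 0)
    (hcop : ∀ g : MvPolynomial (Fin n) K, g ∣ f₁ → g ∣ f₂ → IsUnit g)
    (heq : f₁ * εhat f₂ = εhat f₁ * f₂) :
    ∃ i < d, ∃ j < d, f₁ ∈ comp K n d i ∧ f₂ ∈ comp K n d j := by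
  classical
  have hd0 : 0 < d := by omega
  have hε0 : ε ≠ 0 := by
    intro h; rw [h, zero_pow (by omega)] at hε1; exact zero_ne_one hε1
  have hrel : IsRelPrime f₁ f₂ := hcop
  have heq' : f₁ * εhat.symm f₂ = εhat.symm f₁ * f₂ := by
    have := congrArg εhat.symm heq
    simpa [map_mul] using this.symm
  have d1 : f₁ ∣ εhat f₁ := hrel.dvd_of_dvd_mul_right ⟨εhat f₂, heq.symm⟩
  have d3 : εhat f₁ ∣ f₁ := by
    have d2 : f₁ ∣ εhat.symm f₁ := hrel.dvd_of_dvd_mul_right ⟨εhat.symm f₂, heq'.symm⟩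
    have := map_dvd (εhat : MvPolynomial (Fin n) K →+* MvPolynomial (Fin n) K) d2
    simpa using this
  obtain ⟨g, hg⟩ := d1
  obtain ⟨h, hh⟩ := d3
  have hgh : g * h = 1 := by
    have : f₁ * 1 = f₁ * (g * h) := by
      rw [mul_one]
      calc f₁ = εhat f₁ * h := hh
        _ = f₁ * g * h := by rw [hg]
        _ = f₁ * (g * h) := by ring
    exact (mul_left_cancel₀ hf₁ this).symm
  obtain ⟨c, hc⟩ := isUnit_const' K n g (IsUnit.of_mul_eq_one _ hgh)
  have hcf₁ : εhat f₁ = C c * f₁ := by rw [hg, hc]; ring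
  have hcf₂ : εhat f₂ = C c * f₂ := by
    have : f₁ * εhat f₂ = f₁ * (C c * f₂) := by rw [heq, hcf₁]; ring
    exact mul_left_cancel₀ hf₁ this
  have hsup : ∀ f : MvPolynomial (Fin n) K, εhat f = C c * f → ∀ m ∈ f.support,
      ε ^ mdeg m = c := by
    intro f hf m hm
    have h1 : coeff m (εhat f) = ε ^ mdeg m * coeff m f := coeff_ehat' K n ε εhat hεhat f m
    rw [hf, coeff_C_mul] at h1
    exact mul_right_cancel₀ (mem_support_iff.mp hm) h1.symm
  have key2 : ∀ a b : ℕ, a < d → b < d → a < b → ε ^ a = ε ^ b → False := by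
    intro a b _ hb hab he
    refine hε2 (b - a) (by omega) (by omega) ?_
    have : ε ^ a * ε ^ (b - a) = ε ^ a * 1 := by
      rw [mul_one, ← pow_add, show a + (b - a) = b by omega]; exact he.symm
    exact mul_left_cancel₀ (pow_ne_zero a hε0) this
  have key : ∀ a b : ℕ, ε ^ a = ε ^ b → a % d = b % d := by
    have hmod : ∀ a : ℕ, ε ^ a = ε ^ (a % d) := by
      intro a
      conv_lhs => rw [← Nat.mod_add_div a d]
      rw [pow_add, pow_mul, hε1, one_pow, mul_one]
    intro a b hab
    rw [hmod a, hmod b] at hab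
    rcases Nat.lt_trichotomy (a % d) (b % d) with h | h | h
    · exact absurd hab (fun habs => key2 _ _ (Nat.mod_lt _ hd0) (Nat.mod_lt _ hd0) h habs)
    · exact h
    · exact absurd hab.symm (fun habs => key2 _ _ (Nat.mod_lt _ hd0) (Nat.mod_lt _ hd0) h habs)
  obtain ⟨m₁, hm₁⟩ := support_nonempty.mpr hf₁
  obtain ⟨m₂, hm₂⟩ := support_nonempty.mpr hf₂
  refine ⟨mdeg m₁ % d, Nat.mod_lt _ hd0, mdeg m₂ % d, Nat.mod_lt _ hd0, ?_, ?_⟩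
  · intro m hm
    rw [Nat.mod_mod_of_dvd _ dvd_rfl]
    exact key _ _ (by rw [hsup f₁ hcf₁ m hm, hsup f₁ hcf₁ m₁ hm₁])
  · intro m hm
    rw [Nat.mod_mod_of_dvd _ dvd_rfl]
    exact key _ _ (by rw [hsup f₂ hcf₂ m hm, hsup f₂ hcf₂ m₂ hm₂])
end

section
/- Let K be a field, let d ≥ 2 and n ≥ 1 be integers, let A = K[x_1,…,x_n], and let A_0 be the Veronese subalgebra of A of degree d. Then x_1^d is an irreducible element of the ring A_0. -/
set_option synthInstance.maxHeartbeats 1000000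
set_option maxHeartbeats 1000000

open MvPolynomial

lemma supDegree_eq_zero_imp {n : ℕ} {K : Type} [Field K] {f : MvPolynomial (Fin n) K}
    (h : AddMonoidAlgebra.supDegree toLex f = toLex (0 : Fin n →₀ ℕ)) :
    f = MvPolynomial.C (MvPolynomial.coeff 0 f) := by
  have hsub : f.support ⊆ {0} := by
    intro m hm
    have h1 : toLex m ≤ AddMonoidAlgebra.supDegree toLex f := Finset.le_sup hm
    rw [h] at h1
    have h2 : toLex (0 : Fin n →₀ ℕ) ≤ toLex m := Finsupp.toLex_monotone bot_le
    have : toLex m = toLex (0 : Fin n →₀ ℕ) := le_antisymm h1 h2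
    simpa using toLex.injective this
  have := (Finsupp.support_subset_singleton (a := (0 : Fin n →₀ ℕ))).mp hsub
  rw [MvPolynomial.C_apply, ← MvPolynomial.single_eq_monomial]
  exact AddMonoidAlgebra.coeff_injective this

lemma C_mem (K : Type) [Field K] (n d : ℕ) (c : K) :
    (MvPolynomial.C c : MvPolynomial (Fin n) K) ∈ veronese K n d := by
  classical
  intro m hm
  rw [MvPolynomial.C_apply, MvPolynomial.support_monomial] at hm
  split_ifs at hm
  · simp at hm
  · rw [Finset.mem_singleton] at hm; subst hm; simp [mdeg]

lemma isUnit_of_eq_C (K : Type) [Field K] (n d : ℕ) (a : veronese K n d) (c : K) (hc : c ≠ 0)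
    (h : (a : MvPolynomial (Fin n) K) = MvPolynomial.C c) : IsUnit a := by
  refine IsUnit.of_mul_eq_one (a := a) ⟨MvPolynomial.C c⁻¹, C_mem K n d c⁻¹⟩ (Subtype.ext ?_)
  show (a : MvPolynomial (Fin n) K) * MvPolynomial.C c⁻¹ = 1
  rw [h, ← MvPolynomial.C_mul, mul_inv_cancel₀ hc, MvPolynomial.C_1]

lemma supDegree_X_pow {n : ℕ} {K : Type} [Field K] (i : Fin n) (d : ℕ) :
    AddMonoidAlgebra.supDegree toLex ((MvPolynomial.X i : MvPolynomial (Fin n) K) ^ d)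
      = toLex (Finsupp.single i d) := by
  rw [MvPolynomial.X_pow_eq_monomial, ← MvPolynomial.single_eq_monomial]
  exact AddMonoidAlgebra.supDegree_single_ne_zero _ one_ne_zero

/-- `x₁^d` is irreducible in the Veronese subalgebra `A₀`. -/
theorem stmt11 (K : Type) [Field K] (n d : ℕ) (hn : 1 ≤ n) (hd : 2 ≤ d) :
    Irreducible (⟨(MvPolynomial.X (⟨0, by omega⟩ : Fin n) : MvPolynomial (Fin n) K) ^ d,
      X_pow_mem K n d _⟩ : veronese K n d) := by
  classical
  set i0 : Fin n := ⟨0, by omega⟩ with hi0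
  constructor
  · intro hu
    have hu' : IsUnit ((MvPolynomial.X i0 : MvPolynomial (Fin n) K) ^ d) :=
      hu.map (veronese K n d).val
    obtain ⟨v, hv⟩ := hu'.exists_right_inv
    have := congrArg (MvPolynomial.eval (fun _ => (0 : K))) hv
    simp [zero_pow (by omega : d ≠ 0)] at this
  · rintro ⟨a, ha⟩ ⟨b, hb⟩ hab
    have hab' : (MvPolynomial.X i0 : MvPolynomial (Fin n) K) ^ d = a * b := by
      have := congrArg Subtype.val hab
      simpa using this
    have hXd : (MvPolynomial.X i0 : MvPolynomial (Fin n) K) ^ d ≠ 0 :=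
      pow_ne_zero _ (MvPolynomial.X_ne_zero _)
    have ha0 : a ≠ 0 := by rintro rfl; rw [zero_mul] at hab'; exact hXd hab'
    have hb0 : b ≠ 0 := by rintro rfl; rw [mul_zero] at hab'; exact hXd hab'
    have hsd : AddMonoidAlgebra.supDegree toLex (a * b)
        = AddMonoidAlgebra.supDegree toLex a + AddMonoidAlgebra.supDegree toLex b :=
      AddMonoidAlgebra.supDegree_mul toLex.injective (fun _ _ => rfl)
        (mul_ne_zero ((AddMonoidAlgebra.leadingCoeff_ne_zero toLex.injective).mpr ha0)
          ((AddMonoidAlgebra.leadingCoeff_ne_zero toLex.injective).mpr hb0)) ha0 hb0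
    obtain ⟨ma, hma, hsa⟩ := AddMonoidAlgebra.exists_supDegree_mem_support toLex ha0
    obtain ⟨mb, hmb, hsb⟩ := AddMonoidAlgebra.exists_supDegree_mem_support toLex hb0
    have key : ma + mb = Finsupp.single i0 d := by
      apply toLex.injective
      have h2 : toLex (Finsupp.single i0 d) = toLex ma + toLex mb := by
        rw [← supDegree_X_pow (K := K) i0 d, hab', hsd, hsa, hsb]
      exact h2.symm
    have hsum : mdeg ma + mdeg mb = d := by
      have := congrArg mdeg key
      rwa [mdeg_add, show mdeg (Finsupp.single i0 d) = d by
        simp [mdeg, Finsupp.sum_single_index]] at this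
    have hda : mdeg ma % d = 0 := by simpa using ha ma hma
    have hdb : mdeg mb % d = 0 := by simpa using hb mb hmb
    obtain ⟨k, hk⟩ := Nat.dvd_of_mod_eq_zero hda
    obtain ⟨l, hl⟩ := Nat.dvd_of_mod_eq_zero hdb
    have hkl : k + l = 1 := by
      have hdpos : 0 < d := by omega
      have : d * (k + l) = d * 1 := by rw [Nat.mul_add, mul_one, ← hk, ← hl, hsum]
      exact Nat.eq_of_mul_eq_mul_left hdpos this
    have hcase : mdeg ma = 0 ∨ mdeg mb = 0 := by
      have : k = 0 ∨ l = 0 := by omega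
      rcases this with h | h
      · left; rw [hk, h, mul_zero]
      · right; rw [hl, h, mul_zero]
    rcases hcase with h | h
    · left
      have hma0 : ma = 0 := mdeg_eq_zero h
      have : a = MvPolynomial.C (MvPolynomial.coeff 0 a) :=
        supDegree_eq_zero_imp (by rw [hsa, hma0])
      have hc0 : MvPolynomial.coeff 0 a ≠ 0 := fun hc => ha0 (by rw [this, hc, map_zero])
      exact isUnit_of_eq_C K n d ⟨a, ha⟩ _ hc0 this
    · right
      have hmb0 : mb = 0 := mdeg_eq_zero h
      have : b = MvPolynomial.C (MvPolynomial.coeff 0 b) :=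
        supDegree_eq_zero_imp (by rw [hsb, hmb0])
      have hc0 : MvPolynomial.coeff 0 b ≠ 0 := fun hc => hb0 (by rw [this, hc, map_zero])
      exact isUnit_of_eq_C K n d ⟨b, hb⟩ _ hc0 this
end
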